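/- Let G = (N, γ_1,…,γ_n, ε_1,…,ε_n) be a resource contribution game. A profile P is not a Nash equilibrium under contention-tolerant preferences (P ∉ NE^ct(G)) if and only if there exists a player i ∈ N such that either: (1) P ∉ psat-prof(G,i) and P_i ≠ ∅; or (2) P ∉ psat-prof(G,i) and (P_{-i}, ε_i) ∈ psat-prof(G,i); or (3) P ∈ psat-prof(G,i) and there exists a bundle A ∈ P_i such that (P_{-i}, P_i ∖ {A}) ∈ psat-prof(G,i). -/

import Mathlib

open scoped Classical

/-- A resource contribution game over atomic resource type `Res` with player set `ι`:
each player has a goal (a resource bundle, i.e. a multiset of atomic resources) and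
an endowment (a resource bag, i.e. a multiset of resource bundles). -/
structure RCG (Res ι : Type*) where
  goal : ι → Multiset Res
  endow : ι → Multiset (Multiset Res)

namespace RCG

variable {Res ι : Type*} [Fintype ι]

/-- A profile assigns to each player a bag (his contribution). -/
abbrev Profile (Res ι : Type*) := ι → Multiset (Multiset Res)

/-- Outcome of a profile: the multiset sum of all contributions. -/
def out (P : Profile Res ι) : Multiset (Multiset Res) := ∑ i, P i

/-- The bag `X` can be transformed into the bundle `B`: `♭(B) ⊆ ♭•(X)`. -/
def Trans (X : Multiset (Multiset Res)) (B : Multiset Res) : Prop := B ≤ X.sum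

/-- Player `i` is potentially satisfied by profile `P`. -/
def Psat (G : RCG Res ι) (P : Profile Res ι) (i : ι) : Prop :=
  Trans (out P) (G.goal i)

/-- The set of players potentially satisfied by `P`. -/
noncomputable def psatPlayers (G : RCG Res ι) (P : Profile Res ι) : Finset ι :=
  Finset.univ.filter fun i => Psat G P i

/-- The profile `P` is contentious. -/
def Contentious (G : RCG Res ι) (P : Profile Res ι) : Prop :=
  ¬ Trans (out P) (∑ j ∈ psatPlayers G P, G.goal j)

/-- Restriction of bundle `B` to the resource types occurring in `C`. -/
noncomputable def restr (B C : Multiset Res) : Multiset Res := B.filter (· ∈ C)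

/-- The profile `P` is contentious for player `i`. -/
def ContentiousFor (G : RCG Res ι) (P : Profile Res ι) (i : ι) : Prop :=
  Psat G P i ∧ ¬ Trans (out P) (∑ j ∈ psatPlayers G P, restr (G.goal j) (G.goal i))

/-- The three kinds of preferences: contention-tolerant, (public) contention-averse,
private contention-averse. -/
inductive Pref | ct | ca | pca

/-- `P` is a good profile for player `i` according to preference kind `pref`. -/
def Good (pref : Pref) (G : RCG Res ι) (P : Profile Res ι) (i : ι) : Prop :=
  match pref with
  | .ct => Psat G P i
  | .ca => Psat G P i ∧ ¬ Contentious G P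
  | .pca => Psat G P i ∧ ¬ ContentiousFor G P i

/-- Player `i` strictly prefers `P` over `Q` (i.e. `Q ≺^pref_i P`). -/
def Prefers (pref : Pref) (G : RCG Res ι) (i : ι) (Q P : Profile Res ι) : Prop :=
  (¬ Good pref G P i ∧ ¬ Good pref G Q i ∧ P i < Q i) ∨
  (Good pref G P i ∧ ¬ Good pref G Q i) ∨
  (Good pref G P i ∧ Good pref G Q i ∧ P i < Q i)

/-- `C` is a profitable deviation for player `i` from profile `P`. -/
noncomputable def ProfDev (pref : Pref) (G : RCG Res ι) (P : Profile Res ι) (i : ι)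
    (C : Multiset (Multiset Res)) : Prop :=
  C ≤ G.endow i ∧ Prefers pref G i P (Function.update P i C)

/-- `P` is a pure Nash equilibrium of `G` according to `pref`:
`P` is a profile of `G` and no player has a profitable deviation. -/
noncomputable def NE (pref : Pref) (G : RCG Res ι) (P : Profile Res ι) : Prop :=
  (∀ i, P i ≤ G.endow i) ∧ ∀ i C, ¬ ProfDev pref G P i C

/-- `G` is an RCG with endowments as bags of atomic resources. -/
def IsRCGBAR (G : RCG Res ι) : Prop :=
  ∀ i, ∀ B ∈ G.endow i, ∃ r : Res, B = {r}

/-- `G` has independent objectives. -/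
def IndepObjectives (G : RCG Res ι) : Prop :=
  ∀ i j : ι, i ≠ j → ∀ r : Res, r ∈ G.goal i → r ∉ G.goal j

end RCG


lemma out_update_eq {Res ι : Type*} [Fintype ι] (P : RCG.Profile Res ι) (i : ι)
    (C : Multiset (Multiset Res)) :
    RCG.out (Function.update P i C) = C + ∑ j ∈ Finset.univ \ {i}, P j := by
  unfold RCG.out
  rw [Finset.sum_update_of_mem (Finset.mem_univ i)]

lemma psat_update_mono {Res ι : Type*} [Fintype ι] (G : RCG Res ι)
    (P : RCG.Profile Res ι) (i : ι) {C C' : Multiset (Multiset Res)}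
    (h : C ≤ C') (hp : RCG.Psat G (Function.update P i C) i) :
    RCG.Psat G (Function.update P i C') i := by
  unfold RCG.Psat RCG.Trans at *
  rw [out_update_eq] at hp ⊢
  refine le_trans hp ?_
  obtain ⟨D, rfl⟩ := Multiset.le_iff_exists_add.mp h
  rw [Multiset.sum_add, Multiset.sum_add, Multiset.sum_add]
  exact add_le_add_left (le_add_of_nonneg_right (Multiset.zero_le _)) _

lemma exists_erase_of_lt {α : Type*} {C D : Multiset α} (h : C < D) :
    ∃ A ∈ D, C ≤ D.erase A := by
  obtain ⟨hle, hne⟩ := lt_iff_le_and_ne.mp h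
  have : ∃ a, C.count a < D.count a := by
    by_contra hc
    push_neg at hc
    exact hne (Multiset.ext.mpr fun a => le_antisymm (Multiset.le_iff_count.mp hle a) (hc a))
  obtain ⟨a, ha⟩ := this
  refine ⟨a, Multiset.count_pos.mp (lt_of_le_of_lt (Nat.zero_le _) ha), ?_⟩
  rw [Multiset.le_iff_count]
  intro b
  by_cases hb : b = a
  · subst hb
    rw [Multiset.count_erase_self]
    omega
  · rw [Multiset.count_erase_of_ne hb]
    exact Multiset.le_iff_count.mp hle b

/-- characterization of profiles that are not Nash equilibria under
contention-tolerant preferences. -/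
theorem not_NE_ct_iff {Res ι : Type*} [Fintype ι]
    (G : RCG Res ι) (P : RCG.Profile Res ι) (hP : ∀ i, P i ≤ G.endow i) :
    ¬ RCG.NE .ct G P ↔
      ∃ i : ι,
        (¬ RCG.Psat G P i ∧ P i ≠ 0) ∨
        (¬ RCG.Psat G P i ∧ RCG.Psat G (Function.update P i (G.endow i)) i) ∨
        (RCG.Psat G P i ∧ ∃ A ∈ P i,
          RCG.Psat G (Function.update P i ((P i).erase A)) i) := by

  constructor
  · intro hne
    unfold RCG.NE at hne
    push_neg at hne
    obtain ⟨i, C, hdev⟩ := hne hP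
    obtain ⟨hC, hpref⟩ := hdev
    set Q := Function.update P i C with hQ
    have hQi : Q i = C := Function.update_self i C P
    rcases hpref with ⟨hnG, hnP, hlt⟩ | ⟨hG, hnP⟩ | ⟨hG, hP', hlt⟩
    · refine ⟨i, Or.inl ⟨hnP, ?_⟩⟩
      rw [hQi] at hlt
      intro h0
      rw [h0] at hlt
      exact absurd (lt_of_le_of_lt (Multiset.zero_le C) hlt) (lt_irrefl 0)
    · refine ⟨i, Or.inr (Or.inl ⟨hnP, ?_⟩)⟩
      exact psat_update_mono G P i hC hG
    · rw [hQi] at hlt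
      obtain ⟨A, hA, hle⟩ := exists_erase_of_lt hlt
      refine ⟨i, Or.inr (Or.inr ⟨hP', A, hA, ?_⟩)⟩
      have hle' : C ≤ (P i).erase A := by
        convert hle using 2 <;> exact Subsingleton.elim _ _
      exact psat_update_mono G P i hle' hG
  · rintro ⟨i, h⟩ ⟨_, hne⟩
    rcases h with ⟨hnP, h0⟩ | ⟨hnP, hsat⟩ | ⟨hsat, A, hA, hsat'⟩
    · refine hne i 0 ⟨Multiset.zero_le _, ?_⟩
      by_cases hg : RCG.Good .ct G (Function.update P i 0) i
      · exact Or.inr (Or.inl ⟨hg, hnP⟩)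
      · refine Or.inl ⟨hg, hnP, ?_⟩
        rw [Function.update_self]
        exact lt_of_le_of_ne (Multiset.zero_le _) (Ne.symm h0)
    · exact hne i (G.endow i) ⟨le_refl _, Or.inr (Or.inl ⟨hsat, hnP⟩)⟩
    · refine hne i ((P i).erase A) ⟨le_trans (Multiset.erase_le A (P i)) (hP i), ?_⟩
      refine Or.inr (Or.inr ⟨hsat', hsat, ?_⟩)
      rw [Function.update_self]
      exact Multiset.erase_lt.mpr hA
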